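/- Let λ(x) = Σ_{i<j}[log sin(x_i−x_j) + log sin(x_i+x_j)] + Σ_i [β log sin x_i + β' log cos x_i] with β, β' > 0, defined on the open set C = {x ∈ ℝ^N : 0 < x_1 < ⋯ < x_N < π/2}. Then the Hessian matrix D²λ(x) is negative definite at every point x ∈ C. -/

import Mathlib

open Real

/-- The Hessian of the function `λ(x) = Σ_{i<j}[log sin(x_i−x_j) + log sin(x_i+x_j)]
+ Σ_i [β log sin x_i + β' log cos x_i]`, with entries as computed in the paper, is
negative definite at every point of the Weyl alcove `C` (i.e. its negation is
positive definite). -/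
theorem hessian_negDef (N : ℕ) (β β' : ℝ) (hβ : 0 < β) (hβ' : 0 < β')
    (x : Fin N → ℝ) (hmono : StrictMono x)
    (hx : ∀ i, 0 < x i ∧ x i < π / 2) :
    Matrix.PosDef (-(Matrix.of fun i j : Fin N =>
      if i = j then
        -(∑ k ∈ Finset.univ \ {i},
            ((Real.sin (x i - x k))⁻¹ ^ 2 + (Real.sin (x i + x k))⁻¹ ^ 2))
          - β * (Real.sin (x i))⁻¹ ^ 2 - β' * (Real.cos (x i))⁻¹ ^ 2
      else -(Real.sin (x i - x j))⁻¹ ^ 2 + (Real.sin (x i + x j))⁻¹ ^ 2)) := by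
  have hasymm : ∀ i j : Fin N,
      (Real.sin (x i - x j))⁻¹ ^ 2 = (Real.sin (x j - x i))⁻¹ ^ 2 := by
    intro i j
    rw [← neg_sub (x j) (x i), Real.sin_neg, inv_neg, neg_sq]
  have hbsymm : ∀ i j : Fin N,
      (Real.sin (x i + x j))⁻¹ ^ 2 = (Real.sin (x j + x i))⁻¹ ^ 2 := by
    intro i j; rw [add_comm]
  have hsin : ∀ i, 0 < Real.sin (x i) := fun i =>
    Real.sin_pos_of_pos_of_lt_pi (hx i).1 (lt_trans (hx i).2 (by linarith [Real.pi_pos]))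
  have hcos : ∀ i, 0 < Real.cos (x i) :=
    fun i => Real.cos_pos_of_mem_Ioo ⟨by linarith [(hx i).1, Real.pi_pos], (hx i).2⟩
  rw [Matrix.posDef_iff_dotProduct_mulVec]
  constructor
  · -- Hermitian
    ext i j
    simp only [Matrix.conjTranspose_apply, Matrix.neg_apply, Matrix.of_apply, star_trivial,
      star_neg]
    by_cases hij : i = j
    · subst hij; rfl
    · rw [if_neg (Ne.symm hij), if_neg hij, hasymm j i, hbsymm j i]
  · intro v hv
    simp only [dotProduct, Matrix.mulVec, Pi.star_apply, star_trivial,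
      Matrix.neg_apply, Matrix.of_apply]
    set a : Fin N → Fin N → ℝ := fun i j => (Real.sin (x i - x j))⁻¹ ^ 2 with ha
    set b : Fin N → Fin N → ℝ := fun i j => (Real.sin (x i + x j))⁻¹ ^ 2 with hb
    set F : Fin N → Fin N → ℝ := fun i j =>
      (a i j + b i j) * v i ^ 2 + (a i j - b i j) * (v i * v j) with hF
    have key : ∀ i : Fin N,
        (v i * ∑ j : Fin N, ((-(if i = j then
            -(∑ k ∈ Finset.univ \ {i},
                ((Real.sin (x i - x k))⁻¹ ^ 2 + (Real.sin (x i + x k))⁻¹ ^ 2))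
              - β * (Real.sin (x i))⁻¹ ^ 2 - β' * (Real.cos (x i))⁻¹ ^ 2
          else -(Real.sin (x i - x j))⁻¹ ^ 2 + (Real.sin (x i + x j))⁻¹ ^ 2)) * v j))
        = (β * (Real.sin (x i))⁻¹ ^ 2 + β' * (Real.cos (x i))⁻¹ ^ 2) * v i ^ 2
          + ∑ j ∈ Finset.univ \ {i}, F i j := by
      intro i
      rw [Finset.mul_sum]
      rw [Finset.sum_eq_sum_sdiff_singleton_add (Finset.mem_univ i)]
      rw [if_pos rfl]
      have hoff : ∀ j ∈ Finset.univ \ {i},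
          v i * ((-(if i = j then
            -(∑ k ∈ Finset.univ \ {i},
                ((Real.sin (x i - x k))⁻¹ ^ 2 + (Real.sin (x i + x k))⁻¹ ^ 2))
              - β * (Real.sin (x i))⁻¹ ^ 2 - β' * (Real.cos (x i))⁻¹ ^ 2
          else -(Real.sin (x i - x j))⁻¹ ^ 2 + (Real.sin (x i + x j))⁻¹ ^ 2)) * v j)
          = (a i j - b i j) * (v i * v j) := by
        intro j hj
        have hne : i ≠ j := fun h => by simp [h] at hj
        rw [if_neg hne]; simp only [ha, hb]; ring
      rw [Finset.sum_congr rfl hoff]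
      have hdiag : v i * ((-(-(∑ k ∈ Finset.univ \ {i},
                ((Real.sin (x i - x k))⁻¹ ^ 2 + (Real.sin (x i + x k))⁻¹ ^ 2))
              - β * (Real.sin (x i))⁻¹ ^ 2 - β' * (Real.cos (x i))⁻¹ ^ 2)) * v i)
          = (β * (Real.sin (x i))⁻¹ ^ 2 + β' * (Real.cos (x i))⁻¹ ^ 2) * v i ^ 2
            + ∑ k ∈ Finset.univ \ {i}, (a i k + b i k) * v i ^ 2 := by
        rw [← Finset.sum_mul]; simp only [ha, hb]; ring
      rw [hdiag, hF]
      rw [Finset.sum_add_distrib]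
      ring
    rw [Finset.sum_congr rfl fun i _ => key i, Finset.sum_add_distrib]
    have hT : 0 ≤ ∑ i : Fin N, ∑ j ∈ Finset.univ \ {i}, F i j := by
      have hswap : (∑ i : Fin N, ∑ j ∈ Finset.univ \ {i}, F i j)
          = ∑ i : Fin N, ∑ j ∈ Finset.univ \ {i}, F j i := by
        exact Finset.sum_comm' (by intro p q; simp [eq_comm, and_comm])
      have h2 : (∑ i : Fin N, ∑ j ∈ Finset.univ \ {i}, F i j)
            + (∑ i : Fin N, ∑ j ∈ Finset.univ \ {i}, F i j)
          = ∑ i : Fin N, ∑ j ∈ Finset.univ \ {i}, (F i j + F j i) := by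
        nth_rewrite 2 [hswap]
        rw [← Finset.sum_add_distrib]
        exact Finset.sum_congr rfl fun i _ => (Finset.sum_add_distrib).symm
      have hnn : 0 ≤ ∑ i : Fin N, ∑ j ∈ Finset.univ \ {i}, (F i j + F j i) := by
        refine Finset.sum_nonneg fun i _ => Finset.sum_nonneg fun j _ => ?_
        have : F i j + F j i = a i j * (v i + v j) ^ 2 + b i j * (v i - v j) ^ 2 := by
          simp only [hF, ha, hb]
          rw [hasymm j i, hbsymm j i]; ring
        rw [this]
        have h1 : (0:ℝ) ≤ a i j := by simp only [ha]; positivity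
        have h2 : (0:ℝ) ≤ b i j := by simp only [hb]; positivity
        positivity
      linarith
    have hbase : 0 < ∑ i : Fin N,
        (β * (Real.sin (x i))⁻¹ ^ 2 + β' * (Real.cos (x i))⁻¹ ^ 2) * v i ^ 2 := by
      obtain ⟨i0, hi0⟩ := Function.ne_iff.mp hv
      refine Finset.sum_pos' (fun i _ => ?_) ⟨i0, Finset.mem_univ i0, ?_⟩
      · have h1 : (0:ℝ) < Real.sin (x i) := hsin i
        have h2 : (0:ℝ) < Real.cos (x i) := hcos i
        positivity
      · have h1 : (0:ℝ) < Real.sin (x i0) := hsin i0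
        have h2 : (0:ℝ) < Real.cos (x i0) := hcos i0
        have h3 : v i0 ≠ 0 := hi0
        positivity
    linarith
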